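/- Let e ≥ 1 and a,b ∈ ℕ with 0 ≤ a ≤ q-1 and b - ea ≥ 0. If q-1 ≤ b - ea, then the code C_{A,e}(a,b) ⊆ F_q^{q^2} has minimum distance q - a. -/

import Mathlib

noncomputable def dualCode (F : Type*) [Field F] {ι : Type*} [Fintype ι]
    (C : Submodule F (ι → F)) : Submodule F (ι → F) where
  carrier := {x | ∀ c ∈ C, ∑ i, x i * c i = 0}
  zero_mem' := by intro c _; simp
  add_mem' := by
    intro x y hx hy c hc
    simp only [Pi.add_apply, add_mul, Finset.sum_add_distrib]
    rw [hx c hc, hy c hc, add_zero]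
  smul_mem' := by
    intro a x hx c hc
    simp only [Pi.smul_apply, smul_eq_mul, mul_assoc, ← Finset.mul_sum]
    rw [hx c hc, mul_zero]

noncomputable def minDist (F : Type*) [Field F] {ι : Type*} [Fintype ι] [DecidableEq F]
    (C : Submodule F (ι → F)) : ℕ :=
  sInf {w | ∃ c ∈ C, c ≠ 0 ∧ hammingNorm c = w}

/-- The weight of a matrix codeword: the number of nonzero entries. -/
noncomputable def wt2 {F : Type*} [Zero F] [DecidableEq F] {ι₁ ι₂ : Type*} [Fintype ι₁]
    [Fintype ι₂] (m : ι₂ → ι₁ → F) : ℕ :=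
  hammingNorm (fun p : ι₂ × ι₁ => m p.1 p.2)

noncomputable def minDist2 (F : Type*) [Field F] [DecidableEq F] {ι₁ ι₂ : Type*} [Fintype ι₁]
    [Fintype ι₂] (C : Submodule F (ι₂ → ι₁ → F)) : ℕ :=
  sInf {w | ∃ m ∈ C, m ≠ 0 ∧ wt2 m = w}

noncomputable def dualCode2 (F : Type*) [Field F] {ι₁ ι₂ : Type*} [Fintype ι₁] [Fintype ι₂]
    (C : Submodule F (ι₂ → ι₁ → F)) : Submodule F (ι₂ → ι₁ → F) where
  carrier := {x | ∀ c ∈ C, ∑ i, ∑ j, x i j * c i j = 0}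
  zero_mem' := by intro c _; simp
  add_mem' := by
    intro x y hx hy c hc
    simp only [Pi.add_apply, add_mul, Finset.sum_add_distrib]
    rw [hx c hc, hy c hc, add_zero]
  smul_mem' := by
    intro a x hx c hc
    simp only [Pi.smul_apply, smul_eq_mul, mul_assoc, ← Finset.mul_sum]
    rw [hx c hc, mul_zero]

/-- The affine Reed–Solomon code `RS_q(k)`: evaluations of polynomials of degree `< k` at
all elements of `F`.  By convention it is `{0}` for `k ≤ 0` and the full space for `k ≥ q`. -/
noncomputable def RS (F : Type*) [Field F] (k : ℤ) : Submodule F (F → F) :=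
  (Polynomial.degreeLT F k.toNat).map
    (LinearMap.pi fun α : F => (Polynomial.aeval α).toLinearMap)

/-- The linear map `c ↦ v ⊗ c`, sending a word `c` to the matrix `(v i * c j)_{i,j}`. -/
noncomputable def vTensor (F : Type*) [Field F] {ι₁ ι₂ : Type*} (v : ι₁ → F) :
    (ι₂ → F) →ₗ[F] (ι₁ → ι₂ → F) where
  toFun c := fun i j => v i * c j
  map_add' c d := by funext i j; simp [mul_add]
  map_smul' a c := by funext i j; simp only [Pi.smul_apply, smul_eq_mul, RingHom.id_apply]; ring

/-- The code `C_{𝔸,e}(a,b) = Σ_{d=0}^{a} ⟨(α^d)_α⟩ ⊗ RS_q(b - ed + 1) ⊆ F^{q²}`,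
the evaluation code on the affine chart of the Hirzebruch surface `H_e`.  A codeword is a
matrix indexed by `F × F`, the entry at `(α, β)` being `α^d · f(β)`. -/
noncomputable def CA (F : Type*) [Field F] (e a b : ℕ) : Submodule F (F → F → F) :=
  ⨆ d ∈ Finset.Iic a, (RS F ((b : ℤ) - e * d + 1)).map (vTensor F fun α : F => α ^ d)

open Polynomial

lemma mem_RS_iff {F : Type*} [Field F] (k : ℤ) (x : F → F) :
    x ∈ RS F k ↔ ∃ p : F[X], p.degree < (k.toNat : ℕ) ∧ ∀ α, p.eval α = x α := by
  simp only [RS, Submodule.mem_map, Polynomial.mem_degreeLT]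
  constructor
  · rintro ⟨p, hp, rfl⟩
    exact ⟨p, hp, fun α => by simp [LinearMap.pi_apply, aeval_def]⟩
  · rintro ⟨p, hp, hev⟩
    refine ⟨p, hp, ?_⟩
    funext α
    simp only [LinearMap.pi_apply, AlgHom.toLinearMap_apply, ← hev α]
    simp [aeval_def]

lemma RS_top {F : Type*} [Field F] [Fintype F] [DecidableEq F] (k : ℤ)
    (hk : (Fintype.card F : ℤ) ≤ k) : RS F k = ⊤ := by
  rw [eq_top_iff]
  intro x _
  rw [mem_RS_iff]
  have hinj : Set.InjOn (id : F → F) ↑(Finset.univ : Finset F) := Function.injective_id.injOn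
  refine ⟨Lagrange.interpolate Finset.univ id x, ?_, ?_⟩
  · calc (Lagrange.interpolate Finset.univ id x).degree < (Finset.univ.card : ℕ) :=
        Lagrange.degree_interpolate_lt _ hinj
    _ ≤ (k.toNat : ℕ) := by
        rw [Nat.cast_le, Finset.card_univ]
        omega
  · intro α
    have := Lagrange.eval_interpolate_at_node x hinj (Finset.mem_univ α)
    simpa using this

noncomputable def transposeₗ (F : Type*) [Field F] : (F → F → F) →ₗ[F] (F → F → F) where
  toFun m := fun β α => m α β
  map_add' _ _ := rfl
  map_smul' _ _ := rfl

lemma pow_mem_RS {F : Type*} [Field F] (d a : ℕ) (hd : d ≤ a) :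
    (fun α : F => α ^ d) ∈ RS F ((a : ℤ) + 1) := by
  rw [mem_RS_iff]
  refine ⟨Polynomial.X ^ d, ?_, fun α => by simp⟩
  have : ((a : ℤ) + 1).toNat = a + 1 := by omega
  rw [this]
  calc (Polynomial.X ^ d : F[X]).degree ≤ d := Polynomial.degree_X_pow_le d
  _ < ((a + 1 : ℕ) : WithBot ℕ) := by exact_mod_cast Nat.lt_succ_of_le hd

lemma CA_le {F : Type*} [Field F] (e a b : ℕ) :
    CA F e a b ≤ Submodule.comap (transposeₗ F)
      (Submodule.pi Set.univ fun _ : F => RS F ((a : ℤ) + 1)) := by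
  refine iSup₂_le fun d hd => ?_
  rintro m ⟨c, -, rfl⟩
  intro β _
  have : (fun α : F => (vTensor F (fun α : F => α ^ d)) c α β)
      = c β • (fun α : F => α ^ d) := by
    funext α; simp [vTensor, mul_comm]
  show (fun α : F => _) ∈ _
  rw [show (transposeₗ F) ((vTensor F (fun α : F => α ^ d)) c) β
      = c β • (fun α : F => α ^ d) from this]
  exact Submodule.smul_mem _ _ (pow_mem_RS d a (Finset.mem_Iic.mp hd))

lemma CA_mem_of_cols {F : Type*} [Field F] [Fintype F] [DecidableEq F] (e a b : ℕ)
    (hfull : ∀ d : ℕ, d ≤ a → (Fintype.card F : ℤ) ≤ (b : ℤ) - e * d + 1)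
    (m : F → F → F) (hcol : ∀ β, (fun α => m α β) ∈ RS F ((a : ℤ) + 1)) :
    m ∈ CA F e a b := by
  choose p hp hev using fun β => (mem_RS_iff _ _).mp (hcol β)
  have hdeg : ∀ β, (p β).natDegree < a + 1 := by
    intro β
    rcases eq_or_ne (p β) 0 with h | h
    · simp [h]
    · have h2 := hp β
      rw [show ((a : ℤ) + 1).toNat = a + 1 by omega] at h2
      exact (Polynomial.natDegree_lt_iff_degree_lt h).mpr h2
  have key : m = ∑ d ∈ Finset.range (a + 1),
      (vTensor F fun α : F => α ^ d) (fun β => (p β).coeff d) := by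
    funext α β
    have h1 : m α β = Polynomial.eval α (p β) := (hev β α).symm
    rw [h1, Polynomial.eval_eq_sum_range' (hdeg β) α]
    simp only [Finset.sum_apply, vTensor, LinearMap.coe_mk, AddHom.coe_mk]
    exact Finset.sum_congr rfl fun d _ => mul_comm _ _
  rw [key]
  refine Submodule.sum_mem _ fun d hd => ?_
  have hd' : d ≤ a := by simpa [Nat.lt_succ_iff] using hd
  have hle : (RS F ((b : ℤ) - e * d + 1)).map (vTensor F fun α : F => α ^ d) ≤ CA F e a b :=
    le_iSup₂ (f := fun d (_ : d ∈ Finset.Iic a) =>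
      (RS F ((b : ℤ) - e * d + 1)).map (vTensor F fun α : F => α ^ d)) d (Finset.mem_Iic.mpr hd')
  exact hle ⟨_, by rw [RS_top _ (hfull d hd')]; trivial, rfl⟩

lemma hammingNorm_ge_of_RS {F : Type*} [Field F] [Fintype F] [DecidableEq F] (a : ℕ)
    (ha : a < Fintype.card F) (x : F → F) (hx : x ∈ RS F ((a : ℤ) + 1)) (hx0 : x ≠ 0) :
    Fintype.card F - a ≤ hammingNorm x := by
  obtain ⟨p, hp, hev⟩ := (mem_RS_iff _ _).mp hx
  have hp0 : p ≠ 0 := by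
    rintro rfl
    apply hx0
    funext α
    simpa using (hev α).symm
  have hnd : p.natDegree ≤ a := by
    have := (Polynomial.natDegree_lt_iff_degree_lt hp0).mpr
      (by rwa [show ((a : ℤ) + 1).toNat = a + 1 by omega] at hp)
    omega
  have hzeros : (Finset.univ.filter fun α => ¬ x α ≠ 0).card ≤ a := by
    have hsub : (Finset.univ.filter fun α => ¬ x α ≠ 0) ⊆ p.roots.toFinset := by
      intro α hα
      simp only [Finset.mem_filter, not_not] at hα
      rw [Multiset.mem_toFinset, Polynomial.mem_roots hp0]
      rw [Polynomial.IsRoot, hev α, hα.2]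
    calc (Finset.univ.filter fun α => ¬ x α ≠ 0).card ≤ p.roots.toFinset.card :=
          Finset.card_le_card hsub
      _ ≤ Multiset.card p.roots := p.roots.toFinset_card_le
      _ ≤ p.natDegree := p.card_roots'
      _ ≤ a := hnd
  have htot := Finset.card_filter_add_card_filter_not
    (s := (Finset.univ : Finset F)) (p := fun α => x α ≠ 0)
  unfold hammingNorm
  simp only [Finset.card_univ] at htot
  omega

lemma wt2_col_le {F : Type*} [Field F] [Fintype F] [DecidableEq F] (m : F → F → F) (β : F) :
    hammingNorm (fun α => m α β) ≤ wt2 m := by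
  unfold wt2 hammingNorm
  apply Finset.card_le_card_of_injOn (fun α => (α, β))
  · intro α hα
    simp only [Finset.mem_coe, Finset.mem_filter, Finset.mem_univ, true_and] at *
    exact hα
  · intro α _ α' _ h
    exact (Prod.mk.injEq _ _ _ _ ▸ h).1

lemma exists_min_wt {F : Type*} [Field F] [Fintype F] [DecidableEq F] (a : ℕ)
    (ha : a < Fintype.card F) :
    ∃ m : F → F → F, m ≠ 0 ∧ wt2 m = Fintype.card F - a ∧
      (∀ β, (fun α => m α β) ∈ RS F ((a : ℤ) + 1)) := by
  obtain ⟨S, -, hS⟩ := Finset.exists_subset_card_eq (s := (Finset.univ : Finset F)) (n := a)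
    (by simpa using ha.le)
  set P : F[X] := ∏ c ∈ S, (Polynomial.X - Polynomial.C c) with hP
  have hmon : P.Monic := Polynomial.monic_prod_of_monic _ _ fun c _ => Polynomial.monic_X_sub_C c
  have hnd : P.natDegree = a := by
    rw [hP, Polynomial.natDegree_prod _ _ fun c _ => Polynomial.X_sub_C_ne_zero c]
    simp [hS]
  have heval : ∀ α : F, Polynomial.eval α P = ∏ c ∈ S, (α - c) := by
    intro α; simp [hP, Polynomial.eval_prod]
  have hzero : ∀ α : F, Polynomial.eval α P = 0 ↔ α ∈ S := by
    intro α
    rw [heval, Finset.prod_eq_zero_iff]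
    constructor
    · rintro ⟨c, hc, h⟩; rwa [sub_eq_zero.mp h]
    · intro h; exact ⟨α, h, sub_self α⟩
  refine ⟨fun α β => if β = 0 then Polynomial.eval α P else 0, ?_, ?_, ?_⟩
  · obtain ⟨α, hα⟩ : ∃ α, α ∉ S := by
      by_contra h
      push_neg at h
      have : (Finset.univ : Finset F) ⊆ S := fun x _ => h x
      have := Finset.card_le_card this
      simp [hS, Finset.card_univ] at this
      omega
    intro h
    have := congrFun (congrFun h α) 0
    simp only [if_pos rfl, Pi.zero_apply] at this
    exact hα ((hzero α).mp this)
  · unfold wt2 hammingNorm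
    have hset : (Finset.univ.filter fun p : F × F =>
        (if p.2 = 0 then Polynomial.eval p.1 P else 0) ≠ 0)
        = Sᶜ ×ˢ {(0 : F)} := by
      ext ⟨α, β⟩
      simp only [Finset.mem_filter, Finset.mem_univ, true_and, Finset.mem_product,
        Finset.mem_compl, Finset.mem_singleton]
      constructor
      · intro h
        by_cases hβ : β = 0
        · rw [if_pos hβ] at h
          exact ⟨fun hα => h ((hzero α).mpr hα), hβ⟩
        · simp [hβ] at h
      · rintro ⟨hα, rfl⟩
        simpa using fun h => hα ((hzero α).mp h)
    rw [hset, Finset.card_product, Finset.card_singleton, mul_one, Finset.card_compl, hS]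
  · intro β
    by_cases hβ : β = 0
    · subst hβ
      rw [mem_RS_iff]
      refine ⟨P, ?_, fun α => by simp⟩
      rw [show ((a : ℤ) + 1).toNat = a + 1 by omega, Polynomial.degree_eq_natDegree hmon.ne_zero, hnd]
      exact_mod_cast Nat.lt_succ_self a
    · have : (fun α : F => if β = 0 then Polynomial.eval α P else 0) = 0 := by
        funext α; simp [hβ]
      rw [this]
      exact Submodule.zero_mem _

/-- for `e ≥ 1`, `0 ≤ a ≤ q-1`, `b - ea ≥ 0` and `q - 1 ≤ b - ea`, the code
`C_{𝔸,e}(a,b) ⊆ F^{q²}` has minimum distance `q - a`. -/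
theorem CA_minDist_high (F : Type*) [Field F] [Fintype F] [DecidableEq F] (q e a b : ℕ)
    (hq : Fintype.card F = q) (he : 1 ≤ e) (ha : a ≤ q - 1) (hb : e * a ≤ b)
    (hbq : q - 1 ≤ b - e * a) :
    minDist2 F (CA F e a b) = q - a := by
  have hq1 : 1 ≤ q := hq ▸ Fintype.card_pos
  have haq : a < Fintype.card F := by rw [hq]; omega
  have hfull : ∀ d : ℕ, d ≤ a → (Fintype.card F : ℤ) ≤ (b : ℤ) - e * d + 1 := by
    intro d hd
    have h1 : e * d ≤ e * a := Nat.mul_le_mul_left e hd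
    have h2 : q - 1 ≤ b - e * a := hbq
    rw [hq]
    have : ((e * d : ℕ) : ℤ) ≤ ((e * a : ℕ) : ℤ) := by exact_mod_cast h1
    push_cast at this ⊢
    omega
  obtain ⟨m, hm0, hwt, hcols⟩ := exists_min_wt a haq
  have hmem : (q - a) ∈ {w | ∃ m ∈ CA F e a b, m ≠ 0 ∧ wt2 m = w} :=
    ⟨m, CA_mem_of_cols e a b hfull m hcols, hm0, by rw [hwt, hq]⟩
  refine le_antisymm (Nat.sInf_le hmem) (le_csInf ⟨_, hmem⟩ ?_)
  rintro w ⟨n, hnC, hn0, rfl⟩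
  obtain ⟨α, β, hαβ⟩ : ∃ α β, n α β ≠ 0 := by
    by_contra h
    push_neg at h
    exact hn0 (funext fun α => funext fun β => h α β)
  have hcol := CA_le e a b hnC
  rw [Submodule.mem_comap, Submodule.mem_pi] at hcol
  have hx : (fun α => n α β) ∈ RS F ((a : ℤ) + 1) := hcol β (Set.mem_univ β)
  have hx0 : (fun α => n α β) ≠ 0 := fun h => hαβ (congrFun h α)
  calc q - a = Fintype.card F - a := by rw [hq]
    _ ≤ hammingNorm (fun α => n α β) := hammingNorm_ge_of_RS a haq _ hx hx0
    _ ≤ wt2 n := wt2_col_le n β
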